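/- arXiv:2505.17508 — 2 statements merged into one kernel-verified Lean document; each statement's English description precedes it below -/
import Mathlib

section
/- Unnormalized reverse KL policy gradient identity: with the same setup, define J_URKL(θ) = ∑_x π_θ(x) R(x) − β·(∑_x π_θ(x) log(π_θ(x)/π_old(x)) + ∑_x (π_old(x) − π_θ(x))). Then ∇_θ J_URKL(θ) = ∑_x π_old(x) · w(x) · (R(x) − β log w(x)) · ∇_θ log π_θ(x). -/
/-- Unnormalized reverse KL policy gradient identity (finite case):
for `J_URKL(θ) = ∑ π_θ R − β(∑ π_θ log(π_θ/π_old) + ∑ (π_old − π_θ))`,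
`∇_θ J_URKL(θ₀) = ∑_x π_old(x) w(x) (R(x) − β log w(x)) ∇_θ log π_θ(x)`. -/
theorem unnormalized_reverse_KL_policy_gradient {d : ℕ} {X : Type*} [Fintype X]
    (π : EuclideanSpace ℝ (Fin d) → X → ℝ) (pold : X → ℝ) (R : X → ℝ) (β : ℝ)
    (θ₀ : EuclideanSpace ℝ (Fin d))
    (hβ : 0 ≤ β)
    (hpold : ∀ x, 0 < pold x)
    (hπpos : ∀ θ x, 0 < π θ x) (hπsum : ∀ θ, ∑ x, π θ x = 1)
    (hπdiff : ∀ x, DifferentiableAt ℝ (fun θ => π θ x) θ₀) :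
    fderiv ℝ (fun θ => (∑ x, π θ x * R x)
        - β * ((∑ x, π θ x * Real.log (π θ x / pold x))
              + ∑ x, (pold x - π θ x))) θ₀
      = ∑ x, (pold x * (π θ₀ x / pold x) *
            (R x - β * Real.log (π θ₀ x / pold x))) •
          fderiv ℝ (fun θ => Real.log (π θ x)) θ₀ := by
  set Dx : X → EuclideanSpace ℝ (Fin d) →L[ℝ] ℝ :=
    fun x => fderiv ℝ (fun θ => π θ x) θ₀ with hDx
  have hπne : ∀ θ x, π θ x ≠ 0 := fun θ x => (hπpos θ x).ne'
  have hpne : ∀ x, pold x ≠ 0 := fun x => (hpold x).ne'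
  have hD : ∀ x, HasFDerivAt (fun θ => π θ x) (Dx x) θ₀ :=
    fun x => (hπdiff x).hasFDerivAt
  have hlog : ∀ x, HasFDerivAt (fun θ => Real.log (π θ x))
      ((π θ₀ x)⁻¹ • Dx x) θ₀ := fun x => (hD x).log (hπne θ₀ x)
  -- term A
  have hA : HasFDerivAt (fun θ => ∑ x, π θ x * R x)
      (∑ x, R x • Dx x) θ₀ :=
    HasFDerivAt.fun_sum (fun x _ => (hD x).mul_const (R x))
  -- term B
  have hBx : ∀ x, HasFDerivAt (fun θ => π θ x * Real.log (π θ x / pold x))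
      (π θ₀ x • ((π θ₀ x)⁻¹ • Dx x) +
        (Real.log (π θ₀ x) - Real.log (pold x)) • Dx x) θ₀ := by
    intro x
    have heq : (fun θ => π θ x * Real.log (π θ x / pold x)) =
        fun θ => π θ x * (Real.log (π θ x) - Real.log (pold x)) := by
      funext θ; rw [Real.log_div (hπne θ x) (hpne x)]
    rw [heq]
    exact (hD x).mul ((hlog x).sub_const (Real.log (pold x)))
  have hB : HasFDerivAt (fun θ => ∑ x, π θ x * Real.log (π θ x / pold x))
      (∑ x, (π θ₀ x • ((π θ₀ x)⁻¹ • Dx x) +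
        (Real.log (π θ₀ x) - Real.log (pold x)) • Dx x)) θ₀ :=
    HasFDerivAt.fun_sum (fun x _ => hBx x)
  -- term C
  have hC : HasFDerivAt (fun θ => ∑ x, (pold x - π θ x))
      (∑ x, (0 - Dx x)) θ₀ :=
    HasFDerivAt.fun_sum (fun x _ => (hasFDerivAt_const (pold x) θ₀).sub (hD x))
  have hJ : HasFDerivAt (fun θ => (∑ x, π θ x * R x)
        - β * ((∑ x, π θ x * Real.log (π θ x / pold x))
              + ∑ x, (pold x - π θ x)))
      ((∑ x, R x • Dx x) - β • ((∑ x, (π θ₀ x • ((π θ₀ x)⁻¹ • Dx x) +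
        (Real.log (π θ₀ x) - Real.log (pold x)) • Dx x)) + ∑ x, (0 - Dx x))) θ₀ :=
    hA.sub ((hB.add hC).const_mul β)
  rw [hJ.fderiv]
  have hfl : ∀ x, fderiv ℝ (fun θ => Real.log (π θ x)) θ₀ = (π θ₀ x)⁻¹ • Dx x :=
    fun x => (hlog x).fderiv
  -- simplify both sides to ∑ (R x - β * (log π - log pold)) • Dx x
  have key : (∑ x, R x • Dx x) - β • ((∑ x, (π θ₀ x • ((π θ₀ x)⁻¹ • Dx x) +
        (Real.log (π θ₀ x) - Real.log (pold x)) • Dx x)) + ∑ x, (0 - Dx x))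
      = ∑ x, (R x - β * (Real.log (π θ₀ x) - Real.log (pold x))) • Dx x := by
    rw [← Finset.sum_add_distrib, Finset.smul_sum, ← Finset.sum_sub_distrib]
    refine Finset.sum_congr rfl fun x _ => ?_
    rw [smul_smul, mul_inv_cancel₀ (hπne θ₀ x), one_smul]
    module
  rw [key]
  refine Finset.sum_congr rfl fun x _ => ?_
  rw [hfl x, smul_smul, Real.log_div (hπne θ₀ x) (hpne x)]
  congr 1
  have h1 := hπne θ₀ x
  have h2 := hpne x
  field_simp
end

section
/- Gradient-equivalence for the unnormalized reverse KL surrogate: with L_URKL(θ) = ∑_x π_old(x) · (−w(x) R(x) + β(w(x) log w(x) − w(x))), it holds that ∇_θ L_URKL(θ) = −∇_θ J_URKL(θ), where J_URKL is the unnormalized reverse KL regularized objective J_URKL(θ) = ∑_x π_θ(x) R(x) − β·(∑_x π_θ(x) log(π_θ(x)/π_old(x)) + ∑_x (π_old(x) − π_θ(x))). -/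
/-- Gradient-equivalence of the unnormalized reverse KL surrogate loss:
with `L_URKL(θ) = ∑_x π_old(x)(−w R + β(w log w − w))`,
`∇_θ L_URKL = −∇_θ J_URKL` where
`J_URKL(θ) = ∑ π_θ R − β(∑ π_θ log(π_θ/π_old) + ∑ (π_old − π_θ))`. -/
theorem unnormalized_reverse_KL_surrogate_gradient_equiv
    {d : ℕ} {X : Type*} [Fintype X]
    (π : EuclideanSpace ℝ (Fin d) → X → ℝ) (pold : X → ℝ) (R : X → ℝ) (β : ℝ)
    (θ₀ : EuclideanSpace ℝ (Fin d))
    (hβ : 0 ≤ β)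
    (hpold : ∀ x, 0 < pold x)
    (hπpos : ∀ θ x, 0 < π θ x) (hπsum : ∀ θ, ∑ x, π θ x = 1)
    (hπdiff : ∀ x, DifferentiableAt ℝ (fun θ => π θ x) θ₀) :
    fderiv ℝ (fun θ => ∑ x, pold x *
        (-(π θ x / pold x) * R x
          + β * ((π θ x / pold x) * Real.log (π θ x / pold x)
                  - π θ x / pold x))) θ₀
      = -fderiv ℝ (fun θ => (∑ x, π θ x * R x)
          - β * ((∑ x, π θ x * Real.log (π θ x / pold x))
                + ∑ x, (pold x - π θ x))) θ₀ := by
  have hfun : (fun θ : EuclideanSpace ℝ (Fin d) => ∑ x, pold x *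
        (-(π θ x / pold x) * R x
          + β * ((π θ x / pold x) * Real.log (π θ x / pold x)
                  - π θ x / pold x)))
      = fun θ => -((∑ x, π θ x * R x)
          - β * ((∑ x, π θ x * Real.log (π θ x / pold x))
                + ∑ x, (pold x - π θ x))) + (-(β * ∑ x, pold x)) := by
    funext θ
    have h1 : ∑ x, pold x *
        (-(π θ x / pold x) * R x
          + β * ((π θ x / pold x) * Real.log (π θ x / pold x)
                  - π θ x / pold x))
        = ∑ x, (-(π θ x * R x) + (β * (π θ x * Real.log (π θ x / pold x))
            - β * π θ x)) := by
      refine Finset.sum_congr rfl fun x _ => ?_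
      have h := (hpold x).ne'
      field_simp
    rw [h1]
    simp only [Finset.sum_add_distrib, Finset.sum_sub_distrib, Finset.sum_neg_distrib,
      ← Finset.mul_sum]
    ring
  rw [hfun, fderiv_add_const, fderiv_fun_neg]
end
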